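/- arXiv:1306.1023 — 2 statements merged into one kernel-verified Lean document; each statement's English description precedes it below -/
import Mathlib

section
/- (QFT Plancherel) For f, g ∈ L²(ℝ²; ℍ) (with suitable integrability so that QFT and its inversion hold), the symmetric scalar inner product satisfies ⟨f, g⟩ = (1/(2π)²)·⟨f̂, ĝ⟩, where f̂(u,v) = ∫∫ exp(-i·xu)·f(x,y)·exp(-j·yv) dx dy and ⟨f,g⟩ = ∫∫ ⟨f(x,y)·g̃(x,y)⟩₀ dx dy. -/
open Quaternion MeasureTheory Real

noncomputable def qi : ℍ[ℝ] := ⟨0,1,0,0⟩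
noncomputable def qj : ℍ[ℝ] := ⟨0,0,1,0⟩
noncomputable def qk : ℍ[ℝ] := ⟨0,0,0,1⟩
/-- exp(θ·v) = cos θ + v sin θ for a quaternion unit v with v² = -1. -/
noncomputable def qexp (v : ℍ[ℝ]) (θ : ℝ) : ℍ[ℝ] := (Real.cos θ : ℍ[ℝ]) + Real.sin θ • v

/-- The two-sided quaternion Fourier transform. -/
noncomputable def QFT (f : ℝ × ℝ → ℍ[ℝ]) (u v : ℝ) : ℍ[ℝ] :=
  ∫ p : ℝ × ℝ, qexp qi (-(p.1 * u)) * f p * qexp qj (-(p.2 * v))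

open scoped RealInnerProductSpace

lemma norm_qexp_qi (θ : ℝ) : ‖qexp qi θ‖ = 1 := by
  rw [norm_eq_sqrt_real_inner, Quaternion.inner_self, Quaternion.normSq_def']
  simp [qexp, Quaternion.re_smul, show qi.re = 0 from rfl, show qi.imI = 1 from rfl, show qi.imJ = 0 from rfl, show qi.imK = 0 from rfl]

lemma norm_qexp_qj (θ : ℝ) : ‖qexp qj θ‖ = 1 := by
  rw [norm_eq_sqrt_real_inner, Quaternion.inner_self, Quaternion.normSq_def']
  simp [qexp, Quaternion.re_smul, show qj.re = 0 from rfl, show qj.imI = 0 from rfl, show qj.imJ = 1 from rfl, show qj.imK = 0 from rfl]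

lemma star_qexp_qi (θ : ℝ) : star (qexp qi θ) = qexp qi (-θ) := by
  ext <;> simp [qexp, Quaternion.re_smul, show qi.re = 0 from rfl, show qi.imI = 1 from rfl, show qi.imJ = 0 from rfl, show qi.imK = 0 from rfl]

lemma star_qexp_qj (θ : ℝ) : star (qexp qj θ) = qexp qj (-θ) := by
  ext <;> simp [qexp, Quaternion.re_smul, show qj.re = 0 from rfl, show qj.imI = 0 from rfl, show qj.imJ = 1 from rfl, show qj.imK = 0 from rfl]

lemma re_mul_comm (a b : ℍ[ℝ]) : (a * b).re = (b * a).re := by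
  simp only [Quaternion.re_mul]; ring

lemma continuous_qexp (v : ℍ[ℝ]) : Continuous (qexp v) := by
  unfold qexp
  exact (Quaternion.continuous_coe.comp Real.continuous_cos).add
    (Real.continuous_sin.smul continuous_const)

/-- Integrability of phase-modulated functions. -/
lemma integrable_kernel {h : ℝ × ℝ → ℍ[ℝ]} (hh : Integrable h)
    {a b : ℝ × ℝ → ℝ} (ha : Continuous a) (hb : Continuous b) :
    Integrable (fun q : ℝ × ℝ => qexp qi (a q) * h q * qexp qj (b q)) := by
  refine hh.norm.mono' ?_ ?_
  · exact (((continuous_qexp qi).comp ha).aestronglyMeasurable.mul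
      hh.aestronglyMeasurable).mul ((continuous_qexp qj).comp hb).aestronglyMeasurable
  · filter_upwards with q
    simp [norm_mul, norm_qexp_qi, norm_qexp_qj]

/-- The key algebraic identity (cyclicity of the real part). -/
lemma inner_shift (x y : ℝ) (u v : ℝ) (a b : ℍ[ℝ]) :
    ⟪b, qexp qi (u * x) * a * qexp qj (v * y)⟫ =
      ⟪qexp qi (-(x * u)) * b * qexp qj (-(y * v)), a⟫ := by
  rw [Quaternion.inner_def, Quaternion.inner_def]
  rw [star_mul, star_mul, star_qexp_qi, star_qexp_qj, mul_comm u x, mul_comm v y]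
  set E1 : ℍ[ℝ] := qexp qi (-(x * u))
  set E2 : ℍ[ℝ] := qexp qj (-(y * v))
  have h2 : E1 * b * E2 * star a = E1 * (b * (E2 * star a)) := by
    rw [mul_assoc, mul_assoc]
  rw [h2, re_mul_comm E1, mul_assoc, mul_assoc]

theorem QFT_Plancherel (f g : ℝ × ℝ → ℍ[ℝ])
    (hf : Integrable f) (hg : Integrable g)
    (hFf : Integrable (fun p : ℝ × ℝ => QFT f p.1 p.2))
    (hFg : Integrable (fun p : ℝ × ℝ => QFT g p.1 p.2))
    (hinv : ∀ x y : ℝ, f (x, y) =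
      ((2 * π) ^ 2)⁻¹ • ∫ w : ℝ × ℝ, qexp qi (w.1 * x) * QFT f w.1 w.2 * qexp qj (w.2 * y)) :
    (∫ p : ℝ × ℝ, (f p * star (g p)).re) =
      ((2 * π) ^ 2)⁻¹ * ∫ w : ℝ × ℝ, (QFT f w.1 w.2 * star (QFT g w.1 w.2)).re := by
  set c : ℝ := ((2 * π) ^ 2)⁻¹ with hc
  set F : ℝ × ℝ → ℍ[ℝ] := fun w => QFT f w.1 w.2 with hF
  set G : ℝ × ℝ → ℍ[ℝ] := fun w => QFT g w.1 w.2 with hG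
  -- the modulated g kernel
  set Y : ℝ × ℝ → ℝ × ℝ → ℍ[ℝ] :=
    fun p w => qexp qi (-(p.1 * w.1)) * g p * qexp qj (-(p.2 * w.2)) with hY
  have hYint : ∀ w : ℝ × ℝ, Integrable (fun p => Y p w) := fun w =>
    integrable_kernel hg (by fun_prop) (by fun_prop)
  have hKint : ∀ p : ℝ × ℝ, Integrable (fun w : ℝ × ℝ =>
      qexp qi (w.1 * p.1) * F w * qexp qj (w.2 * p.2)) := fun p =>
    integrable_kernel hFf (by fun_prop) (by fun_prop)
  -- pointwise rewrite of the inner product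
  have step1 : ∀ p : ℝ × ℝ, (f p * star (g p)).re = c * ∫ w : ℝ × ℝ, ⟪Y p w, F w⟫ := by
    rintro ⟨x, y⟩
    rw [show (f (x, y) * star (g (x, y))).re = ⟪f (x, y), g (x, y)⟫ from rfl]
    rw [hinv x y, real_inner_smul_left]
    congr 1
    rw [real_inner_comm, ← integral_inner (hKint (x, y)) (g (x, y))]
    exact integral_congr_ae (Filter.Eventually.of_forall fun w => inner_shift x y w.1 w.2 _ _)
  have hmeas : AEStronglyMeasurable
      (Function.uncurry fun p w : ℝ × ℝ => ⟪Y p w, F w⟫)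
      ((volume : Measure (ℝ × ℝ)).prod volume) := by
    have hY' : AEStronglyMeasurable (fun z : (ℝ × ℝ) × (ℝ × ℝ) => Y z.1 z.2)
        ((volume : Measure (ℝ × ℝ)).prod volume) := by
      refine AEStronglyMeasurable.mul (AEStronglyMeasurable.mul ?_ ?_) ?_
      · exact ((continuous_qexp qi).comp (by fun_prop)).aestronglyMeasurable
      · exact hg.aestronglyMeasurable.comp_quasiMeasurePreserving
          MeasureTheory.Measure.quasiMeasurePreserving_fst
      · exact ((continuous_qexp qj).comp (by fun_prop)).aestronglyMeasurable
    have hF' : AEStronglyMeasurable (fun z : (ℝ × ℝ) × (ℝ × ℝ) => F z.2)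
        ((volume : Measure (ℝ × ℝ)).prod volume) :=
      hFf.aestronglyMeasurable.comp_quasiMeasurePreserving
        MeasureTheory.Measure.quasiMeasurePreserving_snd
    have : (Function.uncurry fun p w : ℝ × ℝ => ⟪Y p w, F w⟫)
        = fun z : (ℝ × ℝ) × (ℝ × ℝ) => (Y z.1 z.2 * star (F z.2)).re := rfl
    rw [this]
    exact Quaternion.continuous_re.comp_aestronglyMeasurable
      (hY'.mul (continuous_star.comp_aestronglyMeasurable hF'))
  have hprod : Integrable (Function.uncurry fun p w : ℝ × ℝ => ⟪Y p w, F w⟫)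
      ((volume : Measure (ℝ × ℝ)).prod volume) := by
    refine ((hg.norm.mul_prod hFf.norm).mono' hmeas ?_)
    filter_upwards with z
    calc ‖⟪Y z.1 z.2, F z.2⟫‖ ≤ ‖Y z.1 z.2‖ * ‖F z.2‖ := by
          exact (abs_real_inner_le_norm _ _)
      _ = ‖g z.1‖ * ‖F z.2‖ := by
          simp [hY, norm_mul, norm_qexp_qi, norm_qexp_qj]
  calc (∫ p : ℝ × ℝ, (f p * star (g p)).re)
      = ∫ p : ℝ × ℝ, c * ∫ w : ℝ × ℝ, ⟪Y p w, F w⟫ := by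
        exact integral_congr_ae (Filter.Eventually.of_forall step1)
    _ = c * ∫ p : ℝ × ℝ, ∫ w : ℝ × ℝ, ⟪Y p w, F w⟫ := integral_const_mul c _
    _ = c * ∫ w : ℝ × ℝ, ∫ p : ℝ × ℝ, ⟪Y p w, F w⟫ := by
        rw [integral_integral_swap hprod]
    _ = c * ∫ w : ℝ × ℝ, (F w * star (G w)).re := by
        congr 1
        refine integral_congr_ae (Filter.Eventually.of_forall fun w => ?_)
        show ∫ p : ℝ × ℝ, ⟪Y p w, F w⟫ = (F w * star (G w)).re
        have h3 : ∫ p : ℝ × ℝ, ⟪Y p w, F w⟫ = ⟪F w, ∫ p, Y p w⟫ := by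
          rw [← integral_inner (hYint w) (F w)]
          exact integral_congr_ae (Filter.Eventually.of_forall fun p => real_inner_comm _ _)
        have hYG : (∫ p : ℝ × ℝ, Y p w) = G w := rfl
        rw [h3, hYG]
        rfl
    _ = c * ∫ w : ℝ × ℝ, (QFT f w.1 w.2 * star (QFT g w.1 w.2)).re := rfl
end

section
/- (QFT of split parts) For f ∈ L²(ℝ²;ℍ) integrable with split f± = (1/2)(f ± i f j), the QFT of f± is given by the one-exponential formulas: QFT(f±)(u,v) = ∫ f±(x,y)·e^{-j(yv ∓ xu)} dx dy = ∫ e^{-i(xu ∓ yv)}·f±(x,y) dx dy. -/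
open Quaternion MeasureTheory Real

lemma key_pr (g : ℍ[ℝ]) (a b : ℝ) :
    qexp qi (-a) * ((2:ℝ)⁻¹ • (g + qi*g*qj)) * qexp qj (-b)
      = ((2:ℝ)⁻¹ • (g + qi*g*qj)) * qexp qj (-(b - a)) := by
  ext <;>
  simp [qexp, Quaternion.re_mul, Quaternion.imI_mul, Quaternion.imJ_mul, Quaternion.imK_mul, Quaternion.re_smul] <;> simp [qi, qj, Quaternion.ext_iff, Real.cos_sub, Real.sin_sub] <;> ring

lemma key_pl (g : ℍ[ℝ]) (a b : ℝ) :
    qexp qi (-a) * ((2:ℝ)⁻¹ • (g + qi*g*qj)) * qexp qj (-b)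
      = qexp qi (-(a - b)) * ((2:ℝ)⁻¹ • (g + qi*g*qj)) := by
  ext <;>
  simp [qexp, Quaternion.re_mul, Quaternion.imI_mul, Quaternion.imJ_mul, Quaternion.imK_mul, Quaternion.re_smul] <;> simp [qi, qj, Quaternion.ext_iff, Real.cos_sub, Real.sin_sub] <;> ring

lemma key_mr (g : ℍ[ℝ]) (a b : ℝ) :
    qexp qi (-a) * ((2:ℝ)⁻¹ • (g - qi*g*qj)) * qexp qj (-b)
      = ((2:ℝ)⁻¹ • (g - qi*g*qj)) * qexp qj (-(b + a)) := by
  ext <;>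
  simp [qexp, Quaternion.re_mul, Quaternion.imI_mul, Quaternion.imJ_mul, Quaternion.imK_mul, Quaternion.re_smul] <;> simp [qi, qj, Quaternion.ext_iff, Real.cos_add, Real.sin_add] <;> ring

lemma key_ml (g : ℍ[ℝ]) (a b : ℝ) :
    qexp qi (-a) * ((2:ℝ)⁻¹ • (g - qi*g*qj)) * qexp qj (-b)
      = qexp qi (-(a + b)) * ((2:ℝ)⁻¹ • (g - qi*g*qj)) := by
  ext <;>
  simp [qexp, Quaternion.re_mul, Quaternion.imI_mul, Quaternion.imJ_mul, Quaternion.imK_mul, Quaternion.re_smul] <;> simp [qi, qj, Quaternion.ext_iff, Real.cos_add, Real.sin_add] <;> ring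

theorem QFT_of_split_parts (f : ℝ × ℝ → ℍ[ℝ]) (u v : ℝ)
    (hf : Integrable f) :
    let fp : ℝ × ℝ → ℍ[ℝ] := fun p => (2:ℝ)⁻¹ • (f p + qi * f p * qj)
    let fm : ℝ × ℝ → ℍ[ℝ] := fun p => (2:ℝ)⁻¹ • (f p - qi * f p * qj)
    QFT fp u v = (∫ p : ℝ × ℝ, fp p * qexp qj (-(p.2 * v - p.1 * u))) ∧
    QFT fp u v = (∫ p : ℝ × ℝ, qexp qi (-(p.1 * u - p.2 * v)) * fp p) ∧
    QFT fm u v = (∫ p : ℝ × ℝ, fm p * qexp qj (-(p.2 * v + p.1 * u))) ∧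
    QFT fm u v = (∫ p : ℝ × ℝ, qexp qi (-(p.1 * u + p.2 * v)) * fm p) := by
  intro fp fm
  refine ⟨?_, ?_, ?_, ?_⟩ <;> unfold QFT <;> congr 1 <;> funext p
  · exact key_pr (f p) (p.1 * u) (p.2 * v)
  · exact key_pl (f p) (p.1 * u) (p.2 * v)
  · exact key_mr (f p) (p.1 * u) (p.2 * v)
  · exact key_ml (f p) (p.1 * u) (p.2 * v)
end
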